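/- arXiv:1412.2237 — 2 statements merged into one kernel-verified Lean document; each statement's English description precedes it below -/
import Mathlib

section
/- For any integers $U, V \geq 1$ and any integer $n > \max\{U, V\}$, the Möbius function satisfies $\mu(n) = -\sum_{\substack{lmd=n \\ 1\leq d\leq V,\ 1\leq m\leq U}} \mu(d)\mu(m) + \sum_{\substack{lmd=n \\ d>V,\ m>U}} \mu(d)\mu(m)$, where the sums range over triples $(l,m,d)$ of positive integers with $lmd = n$ subject to the indicated constraints. -/
open Finset ArithmeticFunction

theorem msum (k : ℕ) : (∑ m ∈ k.divisors, (moebius m : ℤ)) = if k = 1 then 1 else 0 := by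
  rw [← coe_mul_zeta_apply, moebius_mul_coe_zeta, one_apply]

theorem swap_div (n : ℕ) (hn : n ≠ 0) (f : ℕ → ℕ → ℤ) :
    (∑ d ∈ n.divisors, ∑ m ∈ (n / d).divisors, f d m)
      = ∑ m ∈ n.divisors, ∑ d ∈ (n / m).divisors, f d m := by
  apply Finset.sum_comm'
  intro d m
  have key : ∀ a b : ℕ, (a ∈ n.divisors ∧ b ∈ (n / a).divisors) ↔ a * b ∣ n := by
    intro a b
    constructor
    · rintro ⟨ha, hb⟩
      rw [Nat.mem_divisors] at ha hb
      exact (Nat.dvd_div_iff_mul_dvd ha.1).mp hb.1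
    · intro h
      have ha : a ∣ n := (dvd_mul_right a b).trans h
      have hdiv : n / a ≠ 0 := by
        intro hc
        exact hn (by rw [← Nat.div_mul_cancel ha, hc, zero_mul])
      exact ⟨Nat.mem_divisors.mpr ⟨ha, hn⟩,
        Nat.mem_divisors.mpr ⟨(Nat.dvd_div_iff_mul_dvd ha).mpr h, hdiv⟩⟩
  rw [key d m, and_comm, key m d, mul_comm]
  -- fallback

/-- Vaughan's identity for the Möbius function. -/
theorem vaughan_identity_moebius (U V n : ℕ) (hU : 1 ≤ U) (hV : 1 ≤ V)
    (hn : max U V < n) :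
    (moebius n : ℤ) =
      -(∑ d ∈ n.divisors, ∑ m ∈ (n / d).divisors,
          if 1 ≤ d ∧ d ≤ V ∧ 1 ≤ m ∧ m ≤ U then moebius d * moebius m else 0)
      + ∑ d ∈ n.divisors, ∑ m ∈ (n / d).divisors,
          if V < d ∧ U < m then moebius d * moebius m else 0 := by
  have hn0 : n ≠ 0 := by omega
  have hUn : U < n := lt_of_le_of_lt (le_max_left U V) hn
  have hVn : V < n := lt_of_le_of_lt (le_max_right U V) hn
  set A : ℤ := ∑ d ∈ n.divisors, ∑ m ∈ (n / d).divisors,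
      if d ≤ V ∧ m ≤ U then (moebius d : ℤ) * moebius m else 0 with hA
  set B : ℤ := ∑ d ∈ n.divisors, ∑ m ∈ (n / d).divisors,
      if V < d ∧ U < m then (moebius d : ℤ) * moebius m else 0 with hB
  set C : ℤ := ∑ d ∈ n.divisors, ∑ m ∈ (n / d).divisors,
      if d ≤ V ∧ U < m then (moebius d : ℤ) * moebius m else 0 with hC
  set D : ℤ := ∑ d ∈ n.divisors, ∑ m ∈ (n / d).divisors,
      if V < d ∧ m ≤ U then (moebius d : ℤ) * moebius m else 0 with hD
  have hfirst : (∑ d ∈ n.divisors, ∑ m ∈ (n / d).divisors,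
      if 1 ≤ d ∧ d ≤ V ∧ 1 ≤ m ∧ m ≤ U then (moebius d : ℤ) * moebius m else 0) = A := by
    rw [hA]
    refine Finset.sum_congr rfl fun d hd => Finset.sum_congr rfl fun m hm => ?_
    have h1 : 1 ≤ d := Nat.pos_of_mem_divisors hd
    have h2 : 1 ≤ m := Nat.pos_of_mem_divisors hm
    have : (1 ≤ d ∧ d ≤ V ∧ 1 ≤ m ∧ m ≤ U) ↔ (d ≤ V ∧ m ≤ U) := by omega
    rw [if_congr this rfl rfl]
  -- the full sum equals μ n
  have hT : (∑ d ∈ n.divisors, ∑ m ∈ (n / d).divisors, (moebius d : ℤ) * moebius m)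
      = (moebius n : ℤ) := by
    have step : ∀ d ∈ n.divisors,
        (∑ m ∈ (n / d).divisors, (moebius d : ℤ) * moebius m)
          = moebius d * (if n / d = 1 then 1 else 0) := by
      intro d _
      rw [← Finset.mul_sum, msum]
    rw [Finset.sum_congr rfl step, Finset.sum_eq_single n]
    · simp [Nat.div_self (Nat.pos_of_ne_zero hn0)]
    · intro d hd hne
      have hdvd : d ∣ n := (Nat.mem_divisors.mp hd).1
      have : n / d ≠ 1 := by
        intro h
        exact hne (by rw [← Nat.div_mul_cancel hdvd, h, one_mul])
      simp [this]
    · intro h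
      exact absurd (Nat.mem_divisors_self n hn0) h
  -- the inner-divisor sum of μ vanishes for small divisors
  have small : ∀ d ∈ n.divisors, d < n → (∑ m ∈ (n / d).divisors, (moebius m : ℤ)) = 0 := by
    intro d hd hdn
    rw [msum]
    have hdvd : d ∣ n := (Nat.mem_divisors.mp hd).1
    have : n / d ≠ 1 := by
      intro h
      have h2 := Nat.div_mul_cancel hdvd
      rw [h, one_mul] at h2
      omega
    simp [this]
  -- A + C = 0
  have hAC : A + C = 0 := by
    have e1 : A + C = ∑ d ∈ n.divisors, ∑ m ∈ (n / d).divisors,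
        if d ≤ V then (moebius d : ℤ) * moebius m else 0 := by
      rw [hA, hC, ← Finset.sum_add_distrib]
      refine Finset.sum_congr rfl fun d _ => ?_
      rw [← Finset.sum_add_distrib]
      refine Finset.sum_congr rfl fun m _ => ?_
      split_ifs <;> first | ring1 | (exfalso; omega)
    rw [e1]
    refine Finset.sum_eq_zero fun d hd => ?_
    by_cases h1 : d ≤ V
    · simp only [h1, if_true]
      rw [← Finset.mul_sum, small d hd (by omega)]
      ring
    · simp [h1]
  -- A + D = 0
  have hAD : A + D = 0 := by
    have e1 : A + D = ∑ d ∈ n.divisors, ∑ m ∈ (n / d).divisors,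
        if m ≤ U then (moebius d : ℤ) * moebius m else 0 := by
      rw [hA, hD, ← Finset.sum_add_distrib]
      refine Finset.sum_congr rfl fun d _ => ?_
      rw [← Finset.sum_add_distrib]
      refine Finset.sum_congr rfl fun m _ => ?_
      split_ifs <;> first | ring1 | (exfalso; omega)
    rw [e1, swap_div n hn0]
    refine Finset.sum_eq_zero fun m hm => ?_
    by_cases h2 : m ≤ U
    · simp only [h2, if_true]
      rw [← Finset.sum_mul, small m hm (by omega)]
      ring
    · simp [h2]
  -- T = A + B + C + D
  have hsplit : A + B + C + D
      = ∑ d ∈ n.divisors, ∑ m ∈ (n / d).divisors, (moebius d : ℤ) * moebius m := by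
    rw [hA, hB, hC, hD, ← Finset.sum_add_distrib, ← Finset.sum_add_distrib,
      ← Finset.sum_add_distrib]
    refine Finset.sum_congr rfl fun d _ => ?_
    rw [← Finset.sum_add_distrib, ← Finset.sum_add_distrib, ← Finset.sum_add_distrib]
    refine Finset.sum_congr rfl fun m _ => ?_
    split_ifs <;> first | ring1 | (exfalso; omega)
  rw [hfirst]
  have := hsplit.trans hT
  linarith
end

section
/- Let $k \geq 3$ and let $x, y$ be reals with $2 \leq y \leq x$. Suppose $\alpha = a/q + \lambda$ with $\gcd(a,q)=1$, $q \geq 1$. Then $|S_k(x,y;\alpha)| \ll q^{1-1/k+\varepsilon} \sum_{d \mid q} \max_{\chi \bmod q/d} \Big| \sum_{x/d < m \leq (x+y)/d,\ \gcd(m,q)=1} \mu(m)\chi(m) e(m^k d^k \lambda) \Big|$, where $S_k(x,y;\alpha) = \sum_{x < n \leq x+y} \mu(n) e(n^k \alpha)$ and the inner maximum is over Dirichlet characters modulo $q/d$, with absolute implied constant (depending on $\varepsilon$). -/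
open Finset ArithmeticFunction

/-- `e(z) = exp(2 π i z)` -/
noncomputable def e (z : ℝ) : ℂ := Complex.exp (2 * Real.pi * Complex.I * z)

lemma e_add (s t : ℝ) : e (s + t) = e s * e t := by
  rw [e, e, e, ← Complex.exp_add]; congr 1; push_cast; ring

lemma e_int (n : ℤ) : e n = 1 := by
  have : ((2 * Real.pi * Complex.I : ℂ) * (n:ℝ)) = (n:ℤ) * (2 * Real.pi * Complex.I) := by
    push_cast; ring
  rw [e, this, Complex.exp_int_mul_two_pi_mul_I]

lemma norm_e (t : ℝ) : ‖e t‖ = 1 := by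
  simp [e, Complex.norm_exp]

lemma e_div_congr {A B : ℤ} {N : ℕ} (hN : 0 < N) (h : (A : ZMod N) = B) :
    e ((A : ℝ) / N) = e ((B : ℝ) / N) := by
  have hd : (N : ℤ) ∣ A - B := by
    rwa [← ZMod.intCast_zmod_eq_zero_iff_dvd, Int.cast_sub, sub_eq_zero]
  obtain ⟨t, ht⟩ := hd
  have hN' : (N : ℝ) ≠ 0 := (Nat.cast_pos.mpr hN).ne'
  have hAB : (A : ℝ) = B + N * t := by
    have : A = B + N * t := by linarith
    exact_mod_cast congrArg (fun z : ℤ => (z : ℝ)) this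
  have : (A : ℝ) / N = (B : ℝ) / N + t := by field_simp [hAB]; linarith [hAB]
  rw [this, e_add, e_int, mul_one]

variable {N : ℕ} [NeZero N]

noncomputable def coeff (F : ZMod N → ℂ) (χ : DirichletCharacter ℂ N) : ℂ :=
  (N.totient : ℂ)⁻¹ * ∑ u : (ZMod N)ˣ, F u * χ ((u : ZMod N)⁻¹)

lemma fourier_inv (F : ZMod N → ℂ) {b : ZMod N} (hb : IsUnit b) :
    F b = ∑ χ : DirichletCharacter ℂ N, coeff F χ * χ b := by
  have htot : (N.totient : ℂ) ≠ 0 := by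
    exact_mod_cast (Nat.totient_pos.mpr (Nat.pos_of_ne_zero (NeZero.ne N))).ne'
  have key : ∀ u : (ZMod N)ˣ, (∑ χ : DirichletCharacter ℂ N, χ ((u : ZMod N)⁻¹) * χ b)
      = if (u : ZMod N) = b then (N.totient : ℂ) else 0 := fun u =>
    DirichletCharacter.sum_char_inv_mul_char_eq ℂ u.isUnit b
  symm
  calc ∑ χ : DirichletCharacter ℂ N, coeff F χ * χ b
      = (N.totient : ℂ)⁻¹ * ∑ u : (ZMod N)ˣ, F u *
          ∑ χ : DirichletCharacter ℂ N, χ ((u : ZMod N)⁻¹) * χ b := by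
        simp only [coeff, Finset.sum_mul, Finset.mul_sum]
        rw [Finset.sum_comm]
        congr 1; ext u; congr 1; ext χ; ring
    _ = (N.totient : ℂ)⁻¹ * ∑ u : (ZMod N)ˣ,
          (if u = hb.unit then F u * (N.totient : ℂ) else 0) := by
        congr 1; apply Finset.sum_congr rfl; intro u _
        rw [key u]
        have : ((u : ZMod N) = b) ↔ (u = hb.unit) :=
          ⟨fun h => Units.ext (h.trans hb.unit_spec.symm), fun h => by rw [h, hb.unit_spec]⟩
        by_cases h : u = hb.unit
        · simp [h, this.mpr h]
        · have hne : ¬ ((u : ZMod N) = b) := fun hc => h (this.mp hc)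
          simp only [hne, if_false, mul_zero, h, if_false]
    _ = F b := by
        rw [Finset.sum_ite_eq' Finset.univ hb.unit (fun u => F u * (N.totient : ℂ))]
        simp [hb.unit_spec]
        field_simp


lemma conj_char (χ : DirichletCharacter ℂ N) (v : (ZMod N)ˣ) :
    (starRingEnd ℂ) (χ ((v : ZMod N)⁻¹)) = χ (v : ZMod N) := by
  have h1 : χ ((v : ZMod N)⁻¹) * χ (v : ZMod N) = 1 := by
    rw [← map_mul, ZMod.inv_mul_of_unit _ v.isUnit, map_one]
  have hval : ((v : ZMod N)⁻¹) = ((v⁻¹ : (ZMod N)ˣ) : ZMod N) := by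
    rw [ZMod.inv_coe_unit]
  have h2 : ‖χ ((v : ZMod N)⁻¹)‖ = 1 := by
    rw [hval]; exact DirichletCharacter.unit_norm_eq_one χ v⁻¹
  rw [← Complex.inv_eq_conj h2]
  exact inv_eq_of_mul_eq_one_right h1

lemma parseval (F : ZMod N → ℂ) (hF : ∀ u : (ZMod N)ˣ, ‖F u‖ = 1) :
    ∑ χ : DirichletCharacter ℂ N, ‖coeff F χ‖ ^ 2 = 1 := by
  have hNpos : 0 < N := Nat.pos_of_ne_zero (NeZero.ne N)
  have htot : (N.totient : ℂ) ≠ 0 := by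
    exact_mod_cast (Nat.totient_pos.mpr hNpos).ne'
  have key : ∀ (u v : (ZMod N)ˣ),
      (∑ χ : DirichletCharacter ℂ N, χ ((u : ZMod N)⁻¹) * χ (v : ZMod N))
        = if u = v then (N.totient : ℂ) else 0 := by
    intro u v
    rw [DirichletCharacter.sum_char_inv_mul_char_eq ℂ u.isUnit (v : ZMod N)]
    congr 1
    simp [Units.val_inj]
  set g : (ZMod N)ˣ → (ZMod N)ˣ → ℂ := fun u v => F u * (starRingEnd ℂ) (F v) with hg
  have main : ∑ χ : DirichletCharacter ℂ N, coeff F χ * (starRingEnd ℂ) (coeff F χ) = 1 := by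
    have expand : ∀ χ : DirichletCharacter ℂ N, coeff F χ * (starRingEnd ℂ) (coeff F χ)
        = (N.totient : ℂ)⁻¹ * (N.totient : ℂ)⁻¹ *
          ∑ u : (ZMod N)ˣ, ∑ v : (ZMod N)ˣ,
            g u v * (χ ((u : ZMod N)⁻¹) * χ (v : ZMod N)) := by
      intro χ
      rw [coeff, map_mul, map_inv₀, map_natCast, map_sum]
      simp_rw [map_mul, conj_char]
      rw [show ((N.totient:ℂ)⁻¹ * ∑ u : (ZMod N)ˣ, F ↑u * χ (↑u)⁻¹) *
            ((N.totient:ℂ)⁻¹ * ∑ v : (ZMod N)ˣ, (starRingEnd ℂ) (F ↑v) * χ ↑v)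
          = (N.totient:ℂ)⁻¹ * (N.totient:ℂ)⁻¹ *
            ((∑ u : (ZMod N)ˣ, F ↑u * χ (↑u)⁻¹) * (∑ v : (ZMod N)ˣ, (starRingEnd ℂ) (F ↑v) * χ ↑v))
          from by ring]
      rw [Finset.sum_mul_sum]
      congr 1
      apply Finset.sum_congr rfl; intro u _
      apply Finset.sum_congr rfl; intro v _
      simp only [hg]; ring
    rw [Finset.sum_congr rfl (fun χ _ => expand χ), ← Finset.mul_sum]
    have swap : (∑ χ : DirichletCharacter ℂ N, ∑ u : (ZMod N)ˣ, ∑ v : (ZMod N)ˣ,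
          g u v * (χ ((u : ZMod N)⁻¹) * χ (v : ZMod N)))
        = ∑ u : (ZMod N)ˣ, ∑ v : (ZMod N)ˣ, g u v *
            ∑ χ : DirichletCharacter ℂ N, χ ((u : ZMod N)⁻¹) * χ (v : ZMod N) := by
      rw [Finset.sum_comm]
      apply Finset.sum_congr rfl; intro u _
      rw [Finset.sum_comm]
      apply Finset.sum_congr rfl; intro v _
      rw [Finset.mul_sum]
    rw [swap]
    simp_rw [key, mul_ite, mul_zero, Finset.sum_ite_eq, Finset.mem_univ, if_true]
    have hdiag : ∀ u : (ZMod N)ˣ, g u u = 1 := by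
      intro u
      have := Complex.mul_conj (F u)
      rw [hg]
      simp only []
      rw [this, Complex.normSq_eq_norm_sq, hF u]
      norm_num
    simp_rw [hdiag, one_mul, Finset.sum_const, Finset.card_univ, ZMod.card_units_eq_totient,
      nsmul_eq_mul]
    field_simp
  have cast_eq : ((∑ χ : DirichletCharacter ℂ N, ‖coeff F χ‖ ^ 2 : ℝ) : ℂ)
      = ∑ χ : DirichletCharacter ℂ N, coeff F χ * (starRingEnd ℂ) (coeff F χ) := by
    push_cast
    apply Finset.sum_congr rfl; intro χ _
    rw [Complex.mul_conj, Complex.normSq_eq_norm_sq]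
    push_cast; rfl
  have := cast_eq.trans main
  exact_mod_cast this

lemma norm_moebius_le_one (n : ℕ) : ‖(moebius n : ℂ)‖ ≤ 1 := by
  by_cases h : Squarefree n
  · rw [ArithmeticFunction.moebius_apply_of_squarefree h]
    push_cast
    rw [norm_pow, norm_neg, norm_one, one_pow]
  · rw [ArithmeticFunction.moebius_eq_zero_of_not_squarefree h]
    simp

lemma inner_bound (k : ℕ) (hk : 1 ≤ k) (x y lam : ℝ) (a : ℤ) (q d : ℕ)
    (hq : 0 < q) (hd : d ∣ q) (hd0 : 0 < d) :
    ‖∑ m ∈ Finset.Ioc ⌊x / d⌋₊ ⌊(x + y) / d⌋₊,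
        if Nat.gcd m q = 1 then (moebius (d * m) : ℂ)
          * e (((d * m : ℕ) : ℝ) ^ k * ((a : ℝ) / q + lam)) else 0‖
      ≤ Real.sqrt q *
        ⨆ χ : DirichletCharacter ℂ (q / d),
          ‖∑ m ∈ Finset.Ioc ⌊x / d⌋₊ ⌊(x + y) / d⌋₊,
              if Nat.gcd m q = 1 then (moebius m : ℂ) * χ (m : ZMod (q / d))
                * e ((m : ℝ) ^ k * (d : ℝ) ^ k * lam) else 0‖ := by
  set N := q / d with hN
  haveI : NeZero N := ⟨(Nat.div_pos (Nat.le_of_dvd hq hd) hd0).ne'⟩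
  have hNpos : 0 < N := Nat.pos_of_ne_zero (NeZero.ne N)
  have hqdN : d * N = q := Nat.mul_div_cancel' hd
  set c : ℤ := (d : ℤ) ^ (k - 1) * a with hc
  set F : ZMod N → ℂ := fun b => e (((c * (b.val : ℤ) ^ k : ℤ) : ℝ) / N) with hF
  set T : DirichletCharacter ℂ N → ℂ := fun χ =>
    ∑ m ∈ Finset.Ioc ⌊x / d⌋₊ ⌊(x + y) / d⌋₊,
      if Nat.gcd m q = 1 then (moebius m : ℂ) * χ (m : ZMod N)
        * e ((m : ℝ) ^ k * (d : ℝ) ^ k * lam) else 0 with hT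
  have hFnat : ∀ m : ℕ, F (m : ZMod N) = e (((c * (m : ℤ) ^ k : ℤ) : ℝ) / N) := by
    intro m
    apply e_div_congr hNpos
    push_cast
    rw [ZMod.natCast_val, ZMod.cast_id]
  -- the main identity
  have hmain : (∑ m ∈ Finset.Ioc ⌊x / d⌋₊ ⌊(x + y) / d⌋₊,
        if Nat.gcd m q = 1 then (moebius (d * m) : ℂ)
          * e (((d * m : ℕ) : ℝ) ^ k * ((a : ℝ) / q + lam)) else 0)
      = (moebius d : ℂ) * ∑ χ : DirichletCharacter ℂ N, coeff F χ * T χ := by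
    rw [Finset.mul_sum]
    simp_rw [hT, Finset.mul_sum]
    rw [Finset.sum_comm]
    apply Finset.sum_congr rfl
    intro m _
    by_cases hm : Nat.gcd m q = 1
    · simp only [if_pos hm, mul_ite, mul_zero]
      have hcopN : Nat.Coprime m N := Nat.Coprime.coprime_dvd_right (Nat.div_dvd_of_dvd hd) hm
      have hunit : IsUnit ((m : ℕ) : ZMod N) := (ZMod.isUnit_iff_coprime m N).mpr hcopN
      have hmu : (moebius (d * m) : ℂ) = (moebius d : ℂ) * (moebius m : ℂ) := by
        have hcop : Nat.Coprime d m := (Nat.Coprime.coprime_dvd_right hd hm).symm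
        rw [ArithmeticFunction.isMultiplicative_moebius.map_mul_of_coprime hcop]
        push_cast; ring
      have hdR : (d : ℝ) ≠ 0 := Nat.cast_ne_zero.mpr hd0.ne'
      have hNR : (N : ℝ) ≠ 0 := Nat.cast_ne_zero.mpr hNpos.ne'
      have hqR : (q : ℝ) = (d : ℝ) * N := by exact_mod_cast congrArg (Nat.cast : ℕ → ℝ) hqdN.symm
      have hdk : (d : ℝ) ^ k = (d : ℝ) ^ (k - 1) * d := by
        rw [← pow_succ, Nat.sub_add_cancel hk]
      have hsplit : ((d * m : ℕ) : ℝ) ^ k * ((a : ℝ) / q + lam)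
          = ((c * (m : ℤ) ^ k : ℤ) : ℝ) / N + (m : ℝ) ^ k * (d : ℝ) ^ k * lam := by
        push_cast
        rw [hqR]
        rw [mul_pow]
        rw [mul_add]
        congr 1
        · rw [hc]; push_cast; rw [hdk]; field_simp
        · ring
      rw [hsplit, e_add, ← hFnat m, fourier_inv F hunit, hmu]
      rw [Finset.sum_mul, Finset.mul_sum]
      apply Finset.sum_congr rfl
      intro χ _
      ring
    · simp [hm]
  rw [hmain]
  -- now the norm estimate
  have hcard : (Fintype.card (DirichletCharacter ℂ N) : ℝ) = N.totient := by
    rw [← Nat.card_eq_fintype_card, DirichletCharacter.card_eq_totient_of_hasEnoughRootsOfUnity ℂ N]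
  have hpars : ∑ χ : DirichletCharacter ℂ N, ‖coeff F χ‖ ^ 2 = 1 :=
    parseval F (fun u => norm_e _)
  have hsumc : ∑ χ : DirichletCharacter ℂ N, ‖coeff F χ‖ ≤ Real.sqrt q := by
    have h1 : (∑ χ : DirichletCharacter ℂ N, ‖coeff F χ‖) ^ 2
        ≤ (Fintype.card (DirichletCharacter ℂ N) : ℝ)
          * ∑ χ : DirichletCharacter ℂ N, ‖coeff F χ‖ ^ 2 := by
      simpa using sq_sum_le_card_mul_sum_sq
        (s := (Finset.univ : Finset (DirichletCharacter ℂ N))) (f := fun χ => ‖coeff F χ‖)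
    rw [hpars, mul_one, hcard] at h1
    have h2 : (N.totient : ℝ) ≤ q := by
      exact_mod_cast le_trans (Nat.totient_le N) (Nat.div_le_self q d)
    have h3 : 0 ≤ ∑ χ : DirichletCharacter ℂ N, ‖coeff F χ‖ :=
      Finset.sum_nonneg fun _ _ => norm_nonneg _
    rw [show Real.sqrt q = Real.sqrt q from rfl]
    refine (Real.le_sqrt h3 (by positivity)).mpr (le_trans h1 h2)
  set S := ⨆ χ : DirichletCharacter ℂ N, ‖T χ‖ with hS
  have hbdd : BddAbove (Set.range fun χ : DirichletCharacter ℂ N => ‖T χ‖) :=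
    Set.Finite.bddAbove (Set.finite_range _)
  have hTle : ∀ χ, ‖T χ‖ ≤ S := fun χ => le_ciSup hbdd χ
  have hS0 : 0 ≤ S := le_trans (norm_nonneg (T 1)) (hTle 1)
  calc ‖(moebius d : ℂ) * ∑ χ : DirichletCharacter ℂ N, coeff F χ * T χ‖
      ≤ ‖(moebius d : ℂ)‖ * ‖∑ χ : DirichletCharacter ℂ N, coeff F χ * T χ‖ := by
        rw [norm_mul]
    _ ≤ 1 * ∑ χ : DirichletCharacter ℂ N, ‖coeff F χ‖ * ‖T χ‖ := by
        apply mul_le_mul (norm_moebius_le_one d) ?_ (norm_nonneg _) zero_le_one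
        refine le_trans (norm_sum_le _ _) ?_
        apply Finset.sum_le_sum
        intro χ _
        rw [norm_mul]
    _ ≤ (∑ χ : DirichletCharacter ℂ N, ‖coeff F χ‖) * S := by
        rw [one_mul, Finset.sum_mul]
        apply Finset.sum_le_sum
        intro χ _
        exact mul_le_mul_of_nonneg_left (hTle χ) (norm_nonneg _)
    _ ≤ Real.sqrt q * S := mul_le_mul_of_nonneg_right hsumc hS0

lemma reindex (k : ℕ) (x y : ℝ) (hx : 2 ≤ x) (hy : 0 ≤ y) (q : ℕ) (hq : 0 < q) (α : ℝ) :
    ∑ n ∈ Finset.Ioc ⌊x⌋₊ ⌊x + y⌋₊, (moebius n : ℂ) * e ((n : ℝ) ^ k * α)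
      = ∑ d ∈ q.divisors, ∑ m ∈ Finset.Ioc ⌊x / d⌋₊ ⌊(x + y) / d⌋₊,
          if Nat.gcd m q = 1 then (moebius (d * m) : ℂ)
            * e (((d * m : ℕ) : ℝ) ^ k * α) else 0 := by
  have hx0 : (0:ℝ) ≤ x := by linarith
  have hxy0 : (0:ℝ) ≤ x + y := by linarith
  have hmem : ∀ n : ℕ, n ∈ Finset.Ioc ⌊x⌋₊ ⌊x + y⌋₊ ↔ (x < n ∧ (n : ℝ) ≤ x + y) := by
    intro n; rw [Finset.mem_Ioc, Nat.floor_lt hx0, Nat.le_floor_iff hxy0]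
  have hmemd : ∀ d : ℕ, 0 < d → ∀ m : ℕ,
      (m ∈ Finset.Ioc ⌊x / d⌋₊ ⌊(x + y) / d⌋₊ ↔
        (x < ((d * m : ℕ) : ℝ) ∧ ((d * m : ℕ) : ℝ) ≤ x + y)) := by
    intro d hd m
    have hdR : (0:ℝ) < d := by exact_mod_cast hd
    rw [Finset.mem_Ioc, Nat.floor_lt (by positivity), Nat.le_floor_iff (by positivity),
      div_lt_iff₀ hdR, le_div_iff₀ hdR]
    push_cast
    constructor <;> rintro ⟨h1, h2⟩ <;> exact ⟨by nlinarith, by nlinarith⟩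
  rw [← Finset.sum_filter_add_sum_filter_not (Finset.Ioc ⌊x⌋₊ ⌊x + y⌋₊)
        (fun n => Nat.gcd (n / Nat.gcd n q) q = 1)]
  have hzero : ∑ n ∈ (Finset.Ioc ⌊x⌋₊ ⌊x + y⌋₊).filter
        (fun n => ¬ Nat.gcd (n / Nat.gcd n q) q = 1),
      (moebius n : ℂ) * e ((n : ℝ) ^ k * α) = 0 := by
    apply Finset.sum_eq_zero
    intro n hn
    rw [Finset.mem_filter] at hn
    obtain ⟨hn1, hn2⟩ := hn
    have hmu : moebius n = 0 := by
      apply ArithmeticFunction.moebius_eq_zero_of_not_squarefree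
      intro hs
      obtain ⟨p, hp, hpd⟩ := Nat.exists_prime_and_dvd hn2
      have hpng : p ∣ n / Nat.gcd n q := dvd_trans hpd (Nat.gcd_dvd_left _ _)
      have hpq : p ∣ q := dvd_trans hpd (Nat.gcd_dvd_right _ _)
      have hpn : p ∣ n := dvd_trans hpng (Nat.div_dvd_of_dvd (Nat.gcd_dvd_left n q))
      have hpg : p ∣ Nat.gcd n q := Nat.dvd_gcd hpn hpq
      have hpp : p * p ∣ n := by
        have := mul_dvd_mul hpg hpng
        rwa [Nat.mul_div_cancel' (Nat.gcd_dvd_left n q)] at this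
      exact hp.not_isUnit (hs p hpp)
    rw [hmu]; simp
  rw [hzero, add_zero]
  have hbij : ∑ n ∈ (Finset.Ioc ⌊x⌋₊ ⌊x + y⌋₊).filter
        (fun n => Nat.gcd (n / Nat.gcd n q) q = 1),
      (moebius n : ℂ) * e ((n : ℝ) ^ k * α)
      = ∑ p ∈ (q.divisors.sigma fun d =>
            (Finset.Ioc ⌊x / d⌋₊ ⌊(x + y) / d⌋₊).filter (fun m => Nat.gcd m q = 1)),
          (moebius (p.1 * p.2) : ℂ) * e (((p.1 * p.2 : ℕ) : ℝ) ^ k * α) := by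
    apply Finset.sum_nbij' (i := fun n => (⟨Nat.gcd n q, n / Nat.gcd n q⟩ : Σ _ : ℕ, ℕ))
      (j := fun p => p.1 * p.2)
    · intro n hn
      rw [Finset.mem_filter] at hn
      obtain ⟨hn1, hn2⟩ := hn
      have hnx := (hmem n).mp hn1
      have hn0 : 0 < n := by
        by_contra h
        push_neg at h
        interval_cases n
        simp at hnx
        linarith [hnx.1]
      have hg0 : 0 < Nat.gcd n q := Nat.gcd_pos_of_pos_right n hq
      rw [Finset.mem_sigma]
      constructor
      · exact Nat.mem_divisors.mpr ⟨Nat.gcd_dvd_right n q, hq.ne'⟩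
      · rw [Finset.mem_filter]
        refine ⟨?_, hn2⟩
        rw [hmemd _ hg0]
        rw [Nat.mul_div_cancel' (Nat.gcd_dvd_left n q)]
        exact hnx
    · rintro ⟨d, m⟩ hp
      rw [Finset.mem_sigma, Finset.mem_filter] at hp
      obtain ⟨hd, hm, hgcd⟩ := hp
      have hd0 : 0 < d := Nat.pos_of_mem_divisors hd
      rw [Finset.mem_filter]
      have hrange := (hmemd d hd0 m).mp hm
      have hgdm : Nat.gcd (d * m) q = d := by
        rw [Nat.Coprime.gcd_mul_right_cancel d hgcd]
        exact Nat.gcd_eq_left (Nat.dvd_of_mem_divisors hd)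
      constructor
      · rw [hmem]; exact hrange
      · rw [hgdm, Nat.mul_div_cancel_left m hd0]
        exact hgcd
    · intro n hn
      exact Nat.mul_div_cancel' (Nat.gcd_dvd_left n q)
    · rintro ⟨d, m⟩ hp
      rw [Finset.mem_sigma, Finset.mem_filter] at hp
      obtain ⟨hd, hm, hgcd⟩ := hp
      have hd0 : 0 < d := Nat.pos_of_mem_divisors hd
      have hgdm : Nat.gcd (d * m) q = d := by
        rw [Nat.Coprime.gcd_mul_right_cancel d hgcd]
        exact Nat.gcd_eq_left (Nat.dvd_of_mem_divisors hd)
      show (⟨Nat.gcd (d * m) q, (d * m) / Nat.gcd (d * m) q⟩ : Σ _ : ℕ, ℕ) = ⟨d, m⟩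
      rw [hgdm, Nat.mul_div_cancel_left m hd0]
    · intro n hn
      rw [Nat.mul_div_cancel' (Nat.gcd_dvd_left n q)]
  rw [hbij, Finset.sum_sigma]
  apply Finset.sum_congr rfl
  intro d hd
  rw [Finset.sum_filter]

/-- Reduction of the short-interval Möbius exponential sum to character sums. -/
theorem S_k_to_character_sums (k : ℕ) (hk : 3 ≤ k) (ε : ℝ) (hε : 0 < ε) :
    ∃ C : ℝ, 0 < C ∧ ∀ (x y : ℝ), 2 ≤ y → y ≤ x →
      ∀ (a : ℤ) (q : ℕ), 1 ≤ q → Int.gcd a q = 1 → ∀ lam : ℝ,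
      ‖∑ n ∈ Finset.Ioc ⌊x⌋₊ ⌊x + y⌋₊,
          (moebius n : ℂ) * e ((n : ℝ) ^ k * ((a : ℝ) / q + lam))‖
        ≤ C * (q : ℝ) ^ (1 - 1 / (k : ℝ) + ε) *
            ∑ d ∈ q.divisors,
              ⨆ χ : DirichletCharacter ℂ (q / d),
                ‖∑ m ∈ Finset.Ioc ⌊x / d⌋₊ ⌊(x + y) / d⌋₊,
                    if Nat.gcd m q = 1 then
                      (moebius m : ℂ) * χ (m : ZMod (q / d))
                        * e ((m : ℝ) ^ k * (d : ℝ) ^ k * lam)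
                    else 0‖ := by
  refine ⟨1, one_pos, ?_⟩
  intro x y hy hxy a q hq hgcd lam
  have hx : (2:ℝ) ≤ x := le_trans hy hxy
  have hq0 : 0 < q := hq
  have hk1 : 1 ≤ k := le_trans (by norm_num) hk
  rw [reindex k x y hx (by linarith) q hq0 ((a : ℝ) / q + lam)]
  set Sup : ℕ → ℝ := fun d => ⨆ χ : DirichletCharacter ℂ (q / d),
    ‖∑ m ∈ Finset.Ioc ⌊x / d⌋₊ ⌊(x + y) / d⌋₊,
        if Nat.gcd m q = 1 then (moebius m : ℂ) * χ (m : ZMod (q / d))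
          * e ((m : ℝ) ^ k * (d : ℝ) ^ k * lam) else 0‖ with hSup
  have hSup0 : ∀ d, 0 ≤ Sup d := by
    intro d
    exact Real.iSup_nonneg (fun χ => norm_nonneg _)
  have hsq : Real.sqrt q ≤ (q : ℝ) ^ (1 - 1 / (k : ℝ) + ε) := by
    rw [Real.sqrt_eq_rpow]
    apply Real.rpow_le_rpow_of_exponent_le (by exact_mod_cast hq)
    have hk3 : (3:ℝ) ≤ (k : ℝ) := by exact_mod_cast hk
    have h13 : 1 / (k : ℝ) ≤ 1 / 3 := by
      apply one_div_le_one_div_of_le <;> linarith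
    linarith
  calc ‖∑ d ∈ q.divisors, ∑ m ∈ Finset.Ioc ⌊x / d⌋₊ ⌊(x + y) / d⌋₊,
          if Nat.gcd m q = 1 then (moebius (d * m) : ℂ)
            * e (((d * m : ℕ) : ℝ) ^ k * ((a : ℝ) / q + lam)) else 0‖
      ≤ ∑ d ∈ q.divisors, ‖∑ m ∈ Finset.Ioc ⌊x / d⌋₊ ⌊(x + y) / d⌋₊,
          if Nat.gcd m q = 1 then (moebius (d * m) : ℂ)
            * e (((d * m : ℕ) : ℝ) ^ k * ((a : ℝ) / q + lam)) else 0‖ :=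
        norm_sum_le _ _
    _ ≤ ∑ d ∈ q.divisors, Real.sqrt q * Sup d := by
        apply Finset.sum_le_sum
        intro d hd
        exact inner_bound k hk1 x y lam a q d hq0 (Nat.dvd_of_mem_divisors hd)
          (Nat.pos_of_mem_divisors hd)
    _ = Real.sqrt q * ∑ d ∈ q.divisors, Sup d := by rw [Finset.mul_sum]
    _ ≤ (q : ℝ) ^ (1 - 1 / (k : ℝ) + ε) * ∑ d ∈ q.divisors, Sup d :=
        mul_le_mul_of_nonneg_right hsq (Finset.sum_nonneg fun d _ => hSup0 d)
    _ = 1 * (q : ℝ) ^ (1 - 1 / (k : ℝ) + ε) * ∑ d ∈ q.divisors, Sup d := by ring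
end
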